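/- The moments of the adjacency operator v₁ of the graph ᵂA^{ρ₁}_∞(G₂) satisfy φ(v₁ᵐ) = Σ multinomial(k₁, k₂, k₃, k₁−k₂+k₃, k₅, k₁−k₂+k₅, m−3k₁+k₂−2k₃−2k₅), where the sum is over all integers k₁,k₂,k₃,k₅ ≥ 0 with 0 ≤ k₁−k₂+k₃, 0 ≤ k₁−k₂+k₅, and 3k₁−k₂+2k₃+2k₅ ≤ m, and multinomial(a₁,…,a_j) = (a₁+⋯+a_j)!/(a₁!⋯a_j!). -/

import Mathlib

open scoped ENNReal

noncomputable section

abbrev H2 : Type := lp (fun _ : ℤ × ℤ => ℂ) 2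

lemma memℓp_comp_equiv (f : H2) (e : (ℤ × ℤ) ≃ (ℤ × ℤ)) :
    Memℓp (fun i => (f : (ℤ × ℤ) → ℂ) (e i)) 2 := by
  apply memℓp_gen
  have hs : Summable fun i => ‖(f : (ℤ × ℤ) → ℂ) i‖ ^ (2 : ℝ≥0∞).toReal :=
    (memℓp_gen_iff (by norm_num)).1 (lp.memℓp f)
  exact (Equiv.summable_iff e).2 hs

/-- The unitary on `ℓ²(ℤ×ℤ)` induced by a permutation `e` of the index set,
sending `f` to `i ↦ f (e.symm i)`. -/
def lpShift (e : (ℤ × ℤ) ≃ (ℤ × ℤ)) : H2 ≃ₗᵢ[ℂ] H2 where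
  toLinearEquiv :=
    { toFun := fun f => ⟨fun i => f (e.symm i), memℓp_comp_equiv f e.symm⟩
      invFun := fun f => ⟨fun i => f (e i), memℓp_comp_equiv f e⟩
      map_add' := fun f g => by
        apply Subtype.ext
        funext i
        simp only [lp.coeFn_add]
        rfl
      map_smul' := fun c f => by
        apply Subtype.ext
        funext i
        simp only [lp.coeFn_smul, RingHom.id_apply]
        rfl
      left_inv := fun f => by
        apply Subtype.ext
        funext i
        simp
      right_inv := fun f => by
        apply Subtype.ext
        funext i
        simp }
  norm_map' := fun f => by
    have h2 : 0 < (2 : ℝ≥0∞).toReal := by norm_num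
    show ‖(⟨fun i => f (e.symm i), memℓp_comp_equiv f e.symm⟩ : H2)‖ = ‖f‖
    rw [lp.norm_eq_tsum_rpow h2 (⟨fun i => f (e.symm i), memℓp_comp_equiv f e.symm⟩ : H2),
      lp.norm_eq_tsum_rpow h2 f]
    congr 1
    exact Equiv.tsum_eq e.symm
      (fun i => ‖(f : (ℤ × ℤ) → ℂ) i‖ ^ (2 : ℝ≥0∞).toReal)

/-- `s ⊗ 1` : shift in the first variable. -/
def S1 : H2 →L[ℂ] H2 :=
  ((lpShift ((Equiv.addRight (1 : ℤ)).prodCongr (Equiv.refl ℤ))).toLinearIsometry).toContinuousLinearMap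

/-- `1 ⊗ s` : shift in the second variable. -/
def S2 : H2 →L[ℂ] H2 :=
  ((lpShift ((Equiv.refl ℤ).prodCongr (Equiv.addRight (1 : ℤ)))).toLinearIsometry).toContinuousLinearMap

/-- adjoint, i.e. `s* ⊗ 1`. -/
def S1s : H2 →L[ℂ] H2 := ContinuousLinearMap.adjoint S1

def S2s : H2 →L[ℂ] H2 := ContinuousLinearMap.adjoint S2

/-- the adjacency operator of the representation graph of `ρ₁|T²`. -/
def v1 : H2 →L[ℂ] H2 := 1 + S1 + S1s + S2 + S2s + S1 * S2s + S1s * S2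

/-- the adjacency operator of the representation graph of `ρ₂|T²`. -/
def v2 : H2 →L[ℂ] H2 :=
  v1 + 1 + S1 * S2 + S1s * S2s + S1 ^ 2 * S2s + S1s ^ 2 * S2 + S1 * S2s ^ 2 + S1s * S2 ^ 2

/-- The vacuum vector `Ω ⊗ Ω = δ_{(0,0)}`. -/
def Om : H2 := lp.single 2 ((0, 0) : ℤ × ℤ) (1 : ℂ)

-- ==== auxiliary development ====
namespace G2Aux

abbrev A : Type := AddMonoidAlgebra ℂ (ℤ × ℤ)

lemma memℓp_finsupp (f : A) : Memℓp (fun i => f.coeff i) 2 := by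
  apply memℓp_gen
  apply summable_of_ne_finset_zero (s := f.coeff.support)
  intro i hi
  rw [Finsupp.notMem_support_iff.mp hi]
  simp [Real.zero_rpow]

def E (f : A) : H2 := ⟨fun i => f.coeff i, memℓp_finsupp f⟩

lemma E_apply (f : A) (i : ℤ × ℤ) : (E f : (ℤ × ℤ) → ℂ) i = f.coeff i := rfl

lemma E_add (f g : A) : E (f + g) = E f + E g := by
  apply Subtype.ext
  funext i
  simp only [lp.coeFn_add, Pi.add_apply, E_apply]
  exact Finsupp.add_apply f.coeff g.coeff i

lemma lpShift_toCLM_apply (e : (ℤ × ℤ) ≃ (ℤ × ℤ)) (f : H2) (i : ℤ × ℤ) :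
    (((lpShift e).toLinearIsometry.toContinuousLinearMap f : H2) : (ℤ × ℤ) → ℂ) i
      = f (e.symm i) := rfl

lemma adjoint_lpShift (e : (ℤ × ℤ) ≃ (ℤ × ℤ)) :
    ContinuousLinearMap.adjoint ((lpShift e).toLinearIsometry.toContinuousLinearMap) =
      (lpShift e.symm).toLinearIsometry.toContinuousLinearMap := by
  refine ((ContinuousLinearMap.eq_adjoint_iff _ _).2 ?_).symm
  intro x y
  rw [lp.inner_eq_tsum, lp.inner_eq_tsum]
  have := Equiv.tsum_eq e
    (fun i => (inner ℂ ((x : (ℤ × ℤ) → ℂ) i) ((y : (ℤ × ℤ) → ℂ) (e.symm i)) : ℂ))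
  simp only [Equiv.symm_apply_apply] at this
  exact this

lemma lpShift_E (e : (ℤ × ℤ) ≃ (ℤ × ℤ)) (a : ℤ × ℤ) (h : ∀ x, e.symm x = x - a) (f : A) :
    (lpShift e).toLinearIsometry.toContinuousLinearMap (E f)
      = E (AddMonoidAlgebra.single a 1 * f) := by
  apply Subtype.ext
  funext i
  rw [lpShift_toCLM_apply, E_apply, E_apply, AddMonoidAlgebra.coeff_single_mul_apply, one_mul, h]
  congr 1
  abel


open AddMonoidAlgebra

lemma S1_E (f : A) : S1 (E f) = E (single ((1, 0) : ℤ × ℤ) 1 * f) := by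
  apply lpShift_E
  intro x
  ext <;> simp [sub_eq_add_neg]

lemma S2_E (f : A) : S2 (E f) = E (single ((0, 1) : ℤ × ℤ) 1 * f) := by
  apply lpShift_E
  intro x
  ext <;> simp [sub_eq_add_neg]

lemma S1s_E (f : A) : S1s (E f) = E (single ((-1, 0) : ℤ × ℤ) 1 * f) := by
  show ContinuousLinearMap.adjoint S1 (E f) = _
  rw [show S1 = ((lpShift ((Equiv.addRight (1 : ℤ)).prodCongr (Equiv.refl ℤ))).toLinearIsometry).toContinuousLinearMap from rfl,
    adjoint_lpShift]
  apply lpShift_E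
  intro x
  ext <;> simp [sub_eq_add_neg]

lemma S2s_E (f : A) : S2s (E f) = E (single ((0, -1) : ℤ × ℤ) 1 * f) := by
  show ContinuousLinearMap.adjoint S2 (E f) = _
  rw [show S2 = ((lpShift ((Equiv.refl ℤ).prodCongr (Equiv.addRight (1 : ℤ)))).toLinearIsometry).toContinuousLinearMap from rfl,
    adjoint_lpShift]
  apply lpShift_E
  intro x
  ext <;> simp [sub_eq_add_neg]

/-- the step vectors -/
def d : Fin 7 → ℤ × ℤ := ![(1, -1), (-1, 1), (1, 0), (-1, 0), (0, -1), (0, 1), (0, 0)]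

def w : A := ∑ j : Fin 7, single (d j) 1

lemma w_eq : w = single ((0,0) : ℤ × ℤ) 1 + single ((1,0) : ℤ × ℤ) 1
      + single ((-1,0) : ℤ × ℤ) 1 + single ((0,1) : ℤ × ℤ) 1 + single ((0,-1) : ℤ × ℤ) 1
      + single ((1,-1) : ℤ × ℤ) 1 + single ((-1,1) : ℤ × ℤ) 1 := by
  rw [w, Fin.sum_univ_seven, show d 0 = ((1,-1) : ℤ × ℤ) from rfl,
    show d 1 = ((-1,1) : ℤ × ℤ) from rfl, show d 2 = ((1,0) : ℤ × ℤ) from rfl,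
    show d 3 = ((-1,0) : ℤ × ℤ) from rfl, show d 4 = ((0,-1) : ℤ × ℤ) from rfl,
    show d 5 = ((0,1) : ℤ × ℤ) from rfl, show d 6 = ((0,0) : ℤ × ℤ) from rfl]
  abel

lemma v1_E (f : A) : v1 (E f) = E (w * f) := by
  have h1 : (1 : H2 →L[ℂ] H2) (E f) = E (single ((0,0) : ℤ × ℤ) 1 * f) := by
    rw [show ((0,0) : ℤ × ℤ) = 0 from rfl, ← AddMonoidAlgebra.one_def, one_mul]; rfl
  have h12 : (S1 * S2s) (E f) = E (single ((1, -1) : ℤ × ℤ) 1 * f) := by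
    rw [ContinuousLinearMap.mul_apply, S2s_E, S1_E, ← mul_assoc, single_mul_single,
      show ((1,0) : ℤ × ℤ) + (0,-1) = (1,-1) by norm_num [Prod.ext_iff], one_mul]
  have h21 : (S1s * S2) (E f) = E (single ((-1, 1) : ℤ × ℤ) 1 * f) := by
    rw [ContinuousLinearMap.mul_apply, S2_E, S1s_E, ← mul_assoc, single_mul_single,
      show ((-1,0) : ℤ × ℤ) + (0,1) = (-1,1) by norm_num [Prod.ext_iff], one_mul]
  have hv : v1 (E f) = E ((single ((0,0) : ℤ × ℤ) 1 + single ((1,0) : ℤ × ℤ) 1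
      + single ((-1,0) : ℤ × ℤ) 1 + single ((0,1) : ℤ × ℤ) 1 + single ((0,-1) : ℤ × ℤ) 1
      + single ((1,-1) : ℤ × ℤ) 1 + single ((-1,1) : ℤ × ℤ) 1) * f) := by
    simp only [v1, ContinuousLinearMap.add_apply, h1, h12, h21, S1_E, S2_E, S1s_E, S2s_E,
      add_mul, E_add]
  rw [hv, ← w_eq]

lemma v1_pow_Om (m : ℕ) : (v1 ^ m) Om = E (w ^ m) := by
  have hOm : Om = E 1 := by
    apply Subtype.ext
    funext i
    rw [E_apply, AddMonoidAlgebra.one_def, AddMonoidAlgebra.coeff_single, Finsupp.single_apply, Om]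
    by_cases h : i = ((0,0) : ℤ × ℤ)
    · subst h
      rw [lp.single_apply_self, if_pos (show (0 : ℤ × ℤ) = ((0,0) : ℤ × ℤ) from rfl)]
    · rw [lp.single_apply_ne _ _ _ h, if_neg (fun h' => h h'.symm)]
  induction m with
  | zero => simpa using hOm
  | succ n ih =>
      rw [pow_succ', ContinuousLinearMap.mul_apply, ih, v1_E, ← pow_succ']

lemma inner_E_Om (g : A) : (inner ℂ (E g) Om : ℂ) = (starRingEnd ℂ) (g.coeff 0) := by
  rw [Om, lp.inner_single_right]
  show (inner ℂ (g.coeff ((0,0) : ℤ × ℤ)) (1 : ℂ) : ℂ) = _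
  rw [RCLike.inner_apply]
  simp
  rfl


lemma w_pow_apply_zero (m : ℕ) :
    (w ^ m).coeff (0 : ℤ × ℤ) = ((∑ k ∈ Finset.piAntidiag (Finset.univ : Finset (Fin 7)) m,
      if (∑ j : Fin 7, k j • d j) = (0 : ℤ × ℤ)
        then Nat.multinomial Finset.univ k else 0 : ℕ) : ℂ) := by
  rw [w, Finset.sum_pow_eq_sum_piAntidiag, Nat.cast_sum, AddMonoidAlgebra.coeff_sum, Finsupp.finset_sum_apply]
  apply Finset.sum_congr rfl
  intro k hk
  have hprod : (∏ j : Fin 7, AddMonoidAlgebra.single (d j) (1:ℂ) ^ k j)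
      = AddMonoidAlgebra.single (∑ j : Fin 7, k j • d j) 1 := by
    simp only [AddMonoidAlgebra.single_pow, one_pow]
    rw [AddMonoidAlgebra.prod_single]
    simp
  rw [hprod, ← nsmul_eq_mul, AddMonoidAlgebra.coeff_smul, Finsupp.smul_apply, AddMonoidAlgebra.coeff_single, Finsupp.single_apply]
  split_ifs with h <;> simp

lemma cond_iff (k : Fin 7 → ℕ) :
    (∑ j : Fin 7, k j • d j) = (0 : ℤ × ℤ) ↔
      ((k 0 : ℤ) + k 2 = k 1 + k 3 ∧ (k 1 : ℤ) + k 5 = k 0 + k 4) := by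
  rw [Fin.sum_univ_seven, show d 0 = ((1,-1) : ℤ × ℤ) from rfl,
    show d 1 = ((-1,1) : ℤ × ℤ) from rfl, show d 2 = ((1,0) : ℤ × ℤ) from rfl,
    show d 3 = ((-1,0) : ℤ × ℤ) from rfl, show d 4 = ((0,-1) : ℤ × ℤ) from rfl,
    show d 5 = ((0,1) : ℤ × ℤ) from rfl, show d 6 = ((0,0) : ℤ × ℤ) from rfl]
  simp only [Prod.smul_mk, Prod.mk_add_mk, Prod.mk_eq_zero, smul_neg, smul_zero,
    nsmul_eq_mul, mul_one, mul_neg]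
  constructor
  · rintro ⟨h1, h2⟩; constructor <;> omega
  · rintro ⟨h1, h2⟩; constructor <;> omega

lemma v7_0 (a b c d e f g : ℕ) : ![a,b,c,d,e,f,g] 0 = a := rfl
lemma v7_1 (a b c d e f g : ℕ) : ![a,b,c,d,e,f,g] 1 = b := rfl
lemma v7_2 (a b c d e f g : ℕ) : ![a,b,c,d,e,f,g] 2 = c := rfl
lemma v7_3 (a b c d e f g : ℕ) : ![a,b,c,d,e,f,g] 3 = d := rfl
lemma v7_4 (a b c d e f g : ℕ) : ![a,b,c,d,e,f,g] 4 = e := rfl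
lemma v7_5 (a b c d e f g : ℕ) : ![a,b,c,d,e,f,g] 5 = f := rfl
lemma v7_6 (a b c d e f g : ℕ) : ![a,b,c,d,e,f,g] 6 = g := rfl

/-- the inverse map of the reindexing bijection -/
def vec (m : ℕ) (p : ℕ × ℕ × ℕ × ℕ) : Fin 7 → ℕ :=
  ![p.1, p.2.1, p.2.2.1, p.1 + p.2.2.1 - p.2.1, p.2.2.2, p.1 + p.2.2.2 - p.2.1,
    m + p.2.1 - (3 * p.1 + 2 * p.2.2.1 + 2 * p.2.2.2)]

lemma key (m : ℕ) :
    ∑ k ∈ Finset.piAntidiag (Finset.univ : Finset (Fin 7)) m,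
        (if (∑ j : Fin 7, k j • d j) = (0 : ℤ × ℤ) then Nat.multinomial Finset.univ k else 0)
      = ∑ k₁ ∈ Finset.range (m + 1), ∑ k₂ ∈ Finset.range (2 * m + 1),
          ∑ k₃ ∈ Finset.range (m + 1), ∑ k₅ ∈ Finset.range (m + 1),
          if k₂ ≤ k₁ + k₃ ∧ k₂ ≤ k₁ + k₅ ∧ 3 * k₁ + 2 * k₃ + 2 * k₅ ≤ m + k₂ then
            Nat.multinomial Finset.univ
              ![k₁, k₂, k₃, k₁ + k₃ - k₂, k₅, k₁ + k₅ - k₂, m + k₂ - (3 * k₁ + 2 * k₃ + 2 * k₅)]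
          else 0 := by
  classical
  have hRHS : (∑ p ∈ (Finset.range (m + 1) ×ˢ (Finset.range (2 * m + 1) ×ˢ
        (Finset.range (m + 1) ×ˢ Finset.range (m + 1)))),
        if p.2.1 ≤ p.1 + p.2.2.1 ∧ p.2.1 ≤ p.1 + p.2.2.2 ∧
            3 * p.1 + 2 * p.2.2.1 + 2 * p.2.2.2 ≤ m + p.2.1 then
          Nat.multinomial Finset.univ (vec m p) else 0)
      = ∑ k₁ ∈ Finset.range (m + 1), ∑ k₂ ∈ Finset.range (2 * m + 1),
          ∑ k₃ ∈ Finset.range (m + 1), ∑ k₅ ∈ Finset.range (m + 1),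
          if k₂ ≤ k₁ + k₃ ∧ k₂ ≤ k₁ + k₅ ∧ 3 * k₁ + 2 * k₃ + 2 * k₅ ≤ m + k₂ then
            Nat.multinomial Finset.univ
              ![k₁, k₂, k₃, k₁ + k₃ - k₂, k₅, k₁ + k₅ - k₂, m + k₂ - (3 * k₁ + 2 * k₃ + 2 * k₅)]
          else 0 := by
    simp only [Finset.sum_product, vec]
  rw [← hRHS, ← Finset.sum_filter, ← Finset.sum_filter]
  apply Finset.sum_nbij' (i := fun k => ((k 0, (k 1, (k 2, k 4))) : ℕ × ℕ × ℕ × ℕ))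
    (j := fun p => vec m p)
  · intro k hk
    rw [Finset.mem_filter, Finset.mem_piAntidiag] at hk
    obtain ⟨⟨hsum, -⟩, hcond⟩ := hk
    rw [cond_iff] at hcond
    rw [Fin.sum_univ_seven] at hsum
    obtain ⟨h1, h2⟩ := hcond
    simp only [Finset.mem_filter, Finset.mem_product, Finset.mem_range]
    refine ⟨⟨?_, ?_, ?_, ?_⟩, ?_, ?_, ?_⟩ <;> omega
  · intro p hp
    simp only [Finset.mem_filter, Finset.mem_product, Finset.mem_range] at hp
    obtain ⟨⟨hp1, hp2, hp3, hp5⟩, hc1, hc2, hc3⟩ := hp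
    rw [Finset.mem_filter, Finset.mem_piAntidiag, cond_iff]
    refine ⟨⟨?_, fun i _ => Finset.mem_univ i⟩, ?_, ?_⟩ <;>
      simp only [Fin.sum_univ_seven, vec, v7_0, v7_1, v7_2, v7_3, v7_4, v7_5, v7_6] <;> omega
  · intro k hk
    rw [Finset.mem_filter, Finset.mem_piAntidiag] at hk
    obtain ⟨⟨hsum, -⟩, hcond⟩ := hk
    rw [cond_iff] at hcond
    rw [Fin.sum_univ_seven] at hsum
    obtain ⟨h1, h2⟩ := hcond
    funext x
    fin_cases x <;> simp [vec, v7_0, v7_1, v7_2, v7_3, v7_4, v7_5, v7_6] <;> omega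
  · intro p hp
    simp only [vec, v7_0, v7_1, v7_2, v7_4]
  · intro k hk
    rw [Finset.mem_filter, Finset.mem_piAntidiag] at hk
    obtain ⟨⟨hsum, -⟩, hcond⟩ := hk
    rw [cond_iff] at hcond
    rw [Fin.sum_univ_seven] at hsum
    obtain ⟨h1, h2⟩ := hcond
    apply Nat.multinomial_congr
    intro x _
    fin_cases x <;> simp [vec, v7_0, v7_1, v7_2, v7_3, v7_4, v7_5, v7_6] <;> omega

end G2Aux


theorem G2_torus_moment_multinomial (m : ℕ) :
    inner (𝕜 := ℂ) ((v1 ^ m) Om) Om =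
      ((∑ k₁ ∈ Finset.range (m + 1), ∑ k₂ ∈ Finset.range (2 * m + 1),
          ∑ k₃ ∈ Finset.range (m + 1), ∑ k₅ ∈ Finset.range (m + 1),
          if k₂ ≤ k₁ + k₃ ∧ k₂ ≤ k₁ + k₅ ∧ 3 * k₁ + 2 * k₃ + 2 * k₅ ≤ m + k₂ then
            Nat.multinomial Finset.univ
              ![k₁, k₂, k₃, k₁ + k₃ - k₂, k₅, k₁ + k₅ - k₂, m + k₂ - (3 * k₁ + 2 * k₃ + 2 * k₅)]
          else 0 : ℕ) : ℂ) := by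
  rw [G2Aux.v1_pow_Om, G2Aux.inner_E_Om, G2Aux.w_pow_apply_zero, G2Aux.key, map_natCast]

end
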